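/- Let V be a commutative unital ring, 𝔪 an idempotent ideal with 𝔪̃ = 𝔪 ⊗_V 𝔪, and A a commutative V-algebra. Then 𝔪̃ ⊗_V Hom_V(𝔪̃, 𝔪̃ ⊗_V A) ≅ 𝔪̃ ⊗_V A and Hom_V(𝔪̃, 𝔪̃ ⊗_V A) ≅ Hom_V(𝔪̃, A) as A-modules. -/

import Mathlib

set_option maxHeartbeats 1000000
set_option synthInstance.maxHeartbeats 1000000

open TensorProduct

variable {V : Type*} [CommRing V]

/-- 𝔪̃ = 𝔪 ⊗[V] 𝔪. -/
abbrev mTilde (𝔪 : Ideal V) : Type _ := ↥𝔪 ⊗[V] ↥𝔪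

/-- The multiplication map `𝔪 ⊗[V] 𝔪 → 𝔪`. -/
noncomputable def mulMapI (𝔪 : Ideal V) : mTilde 𝔪 →ₗ[V] ↥𝔪 :=
  (Submodule.inclusion Ideal.mul_le_right).comp (Submodule.mulMap' 𝔪 𝔪)

/-- `ν : 𝔪̃ → V`, `a ⊗ b ↦ a * b`. -/
noncomputable def nuMap (𝔪 : Ideal V) : mTilde 𝔪 →ₗ[V] V :=
  𝔪.subtype.comp (mulMapI 𝔪)

/-- The action map `𝔪̃ ⊗[V] M → M`, `(a ⊗ b) ⊗ x ↦ (a * b) • x`. -/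
noncomputable def muTilde (𝔪 : Ideal V) (M : Type*) [AddCommGroup M] [Module V M] :
    mTilde 𝔪 ⊗[V] M →ₗ[V] M :=
  TensorProduct.lift ((LinearMap.lsmul V M).comp (nuMap 𝔪))

/-- The evaluation map `𝔪̃ ⊗[V] Hom_V(𝔪̃, X) → X`, `a ⊗ f ↦ f a`. -/
noncomputable def evMap (𝔪 : Ideal V) (X : Type*) [AddCommGroup X] [Module V X] :
    mTilde 𝔪 ⊗[V] (mTilde 𝔪 →ₗ[V] X) →ₗ[V] X :=
  TensorProduct.lift (LinearMap.id (M := mTilde 𝔪 →ₗ[V] X)).flip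

namespace Stmt14Aux

variable (𝔪 : Ideal V)

@[simp] lemma mulMapI_coe (a b : ↥𝔪) : (mulMapI 𝔪 (a ⊗ₜ[V] b) : V) = (a : V) * b := by
  simp [mulMapI]

@[simp] lemma nuMap_tmul (a b : ↥𝔪) : nuMap 𝔪 (a ⊗ₜ[V] b) = (a : V) * b := by
  simp [nuMap]

@[simp] lemma muTilde_tmul (M : Type*) [AddCommGroup M] [Module V M] (x : mTilde 𝔪)
    (m : M) : muTilde 𝔪 M (x ⊗ₜ[V] m) = nuMap 𝔪 x • m := by
  simp [muTilde]

@[simp] lemma evMap_tmul (X : Type*) [AddCommGroup X] [Module V X] (x : mTilde 𝔪)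
    (f : mTilde 𝔪 →ₗ[V] X) : evMap 𝔪 X (x ⊗ₜ[V] f) = f x := by
  simp [evMap]

lemma smul_comm_subtype (s a : ↥𝔪) : (s : V) • a = (a : V) • s :=
  Subtype.ext (by simp [mul_comm])

lemma smul_key (s t a b : ↥𝔪) :
    ((s : V) * (t : V)) • (a ⊗ₜ[V] b : mTilde 𝔪) = ((a : V) * (b : V)) • (s ⊗ₜ[V] t) := by
  have e1 : ((s : V) * (t : V)) • (a ⊗ₜ[V] b : mTilde 𝔪)
      = ((s : V) • a) ⊗ₜ[V] ((t : V) • b) := by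
    rw [smul_tmul' ((s : V) * (t : V)) a b, mul_comm (s : V) (t : V), mul_smul,
      smul_tmul (t : V) _ b]
  have e2 : ((a : V) * (b : V)) • (s ⊗ₜ[V] t : mTilde 𝔪)
      = ((a : V) • s) ⊗ₜ[V] ((b : V) • t) := by
    rw [smul_tmul' ((a : V) * (b : V)) s t, mul_comm (a : V) (b : V), mul_smul,
      smul_tmul (b : V) _ t]
  rw [e1, e2, smul_comm_subtype 𝔪 s a, smul_comm_subtype 𝔪 t b]

/-- `ν(x) • y = ν(y) • x` in `𝔪̃`. -/
lemma starS (x y : mTilde 𝔪) : nuMap 𝔪 x • y = nuMap 𝔪 y • x := by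
  induction x using TensorProduct.induction_on with
  | zero => simp
  | tmul s t =>
    induction y using TensorProduct.induction_on with
    | zero => simp
    | tmul a b => simpa using smul_key 𝔪 s t a b
    | add y₁ y₂ h₁ h₂ => rw [smul_add, h₁, h₂, map_add, add_smul]
  | add x₁ x₂ h₁ h₂ => rw [map_add, add_smul, h₁, h₂, smul_add]

/-- `ν(x) • W = x ⊗ μ(W)` in `𝔪̃ ⊗ M`. -/
lemma star (M : Type*) [AddCommGroup M] [Module V M] (x : mTilde 𝔪) (W : mTilde 𝔪 ⊗[V] M) :
    nuMap 𝔪 x • W = x ⊗ₜ[V] muTilde 𝔪 M W := by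
  induction W using TensorProduct.induction_on with
  | zero => simp
  | tmul y m =>
    rw [muTilde_tmul, smul_tmul' (nuMap 𝔪 x) y m, starS 𝔪 x y, smul_tmul]
  | add W₁ W₂ h₁ h₂ => rw [smul_add, h₁, h₂, map_add, tmul_add]

/-- `s • k = s ⊗ (mulMapI k)` for `s : 𝔪`, `k : 𝔪̃`. -/
lemma starI (s : ↥𝔪) (k : mTilde 𝔪) : (s : V) • k = s ⊗ₜ[V] mulMapI 𝔪 k := by
  induction k using TensorProduct.induction_on with
  | zero => simp
  | tmul a b =>
    have h1 : (s : V) • (a ⊗ₜ[V] b : mTilde 𝔪) = ((a : V) • s) ⊗ₜ[V] b := by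
      rw [smul_tmul' (s : V) a b, smul_comm_subtype 𝔪 s a]
    have h2 : mulMapI 𝔪 (a ⊗ₜ[V] b) = (a : V) • b :=
      Subtype.ext (by simp)
    rw [h1, h2, smul_tmul]
  | add k₁ k₂ h₁ h₂ => rw [smul_add, h₁, h₂, map_add, tmul_add]

/-- If `T` is killed by `𝔪`, then `T ⊗ 𝔪 = 0`. -/
lemma torsion_tensor (hm : 𝔪 * 𝔪 = 𝔪) (T : Type*) [AddCommGroup T] [Module V T]
    (hT : ∀ (t : T) (s : V), s ∈ 𝔪 → s • t = 0) (z : T ⊗[V] ↥𝔪) : z = 0 := by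
  induction z using TensorProduct.induction_on with
  | zero => rfl
  | tmul t a =>
    obtain ⟨v, hv⟩ := a
    have hv' : v ∈ 𝔪 * 𝔪 := by rw [hm]; exact hv
    have key : ∀ (w : V) (hw : w ∈ 𝔪 * 𝔪), t ⊗ₜ[V] (⟨w, hm.le hw⟩ : ↥𝔪) = 0 := by
      intro w hw
      induction hw using Submodule.mul_induction_on' with
      | mem_mul_mem m hm' n hn' =>
        have : (⟨m * n, hm.le (Submodule.mul_mem_mul hm' hn')⟩ : ↥𝔪) = m • ⟨n, hn'⟩ :=
          Subtype.ext (by simp)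
        rw [this, tmul_smul, smul_tmul', hT t m hm', zero_tmul]
      | add x hx y hy ihx ihy =>
        have : (⟨x + y, hm.le (add_mem hx hy)⟩ : ↥𝔪)
            = (⟨x, hm.le hx⟩ : ↥𝔪) + ⟨y, hm.le hy⟩ := rfl
        rw [this, tmul_add, ihx, ihy, add_zero]
    exact key v hv'
  | add z₁ z₂ h₁ h₂ => rw [h₁, h₂, add_zero]

/-- Tensoring a surjection with almost-zero kernel with `𝔪` gives a bijection. -/
lemma rTensor_bij (hm : 𝔪 * 𝔪 = 𝔪) {P Q : Type*} [AddCommGroup P] [Module V P]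
    [AddCommGroup Q] [Module V Q] (f : P →ₗ[V] Q) (hsurj : Function.Surjective f)
    (hker : ∀ k, f k = 0 → ∀ s ∈ 𝔪, s • k = 0) :
    Function.Bijective (f.rTensor ↥𝔪) := by
  constructor
  · rw [← LinearMap.ker_eq_bot, LinearMap.ker_eq_bot']
    intro z hz
    have hex := rTensor_exact (R := V) (↥𝔪) (LinearMap.exact_subtype_ker_map f) hsurj
    obtain ⟨w, hw⟩ := (hex z).mp hz
    have : w = 0 := torsion_tensor 𝔪 hm _ (fun t s hs => Subtype.ext (by
      simpa using hker t.1 (LinearMap.mem_ker.mp t.2) s hs)) w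
    rw [← hw, this, map_zero]
  · exact LinearMap.rTensor_surjective ↥𝔪 hsurj

lemma mulMapI_surjective (hm : 𝔪 * 𝔪 = 𝔪) : Function.Surjective (mulMapI 𝔪) := by
  rintro ⟨v, hv⟩
  have hv' : v ∈ 𝔪 * 𝔪 := by rw [hm]; exact hv
  have key : ∀ (w : V) (hw : w ∈ 𝔪 * 𝔪), ∃ z, mulMapI 𝔪 z = (⟨w, hm.le hw⟩ : ↥𝔪) := by
    intro w hw
    induction hw using Submodule.mul_induction_on' with
    | mem_mul_mem m hm' n hn' =>
      exact ⟨(⟨m, hm'⟩ : ↥𝔪) ⊗ₜ[V] ⟨n, hn'⟩, Subtype.ext (by simp)⟩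
    | add x hx y hy ihx ihy =>
      obtain ⟨z₁, hz₁⟩ := ihx
      obtain ⟨z₂, hz₂⟩ := ihy
      exact ⟨z₁ + z₂, by rw [map_add, hz₁, hz₂]; rfl⟩
  exact key v hv'

lemma mulMapI_ker_torsion (k : mTilde 𝔪) (hk : mulMapI 𝔪 k = 0) :
    ∀ s ∈ 𝔪, s • k = 0 := by
  intro s hs
  have := starI 𝔪 ⟨s, hs⟩ k
  rw [hk, tmul_zero] at this
  exact this

/-- `𝔪̃ ⊗ 𝔪 → 𝔪̃` is bijective. -/
lemma rT1_bij (hm : 𝔪 * 𝔪 = 𝔪) :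
    Function.Bijective ((mulMapI 𝔪).rTensor ↥𝔪) :=
  rTensor_bij 𝔪 hm _ (mulMapI_surjective 𝔪 hm) (mulMapI_ker_torsion 𝔪)

lemma G_eq : muTilde 𝔪 ↥𝔪 = (mulMapI 𝔪).comp ((mulMapI 𝔪).rTensor ↥𝔪) := by
  apply TensorProduct.ext'
  intro x c
  induction x using TensorProduct.induction_on with
  | zero => simp
  | tmul a b =>
    simp only [muTilde_tmul, LinearMap.comp_apply, LinearMap.rTensor_tmul, nuMap_tmul]
    exact Subtype.ext (by simp [mul_assoc, mul_smul])
  | add x₁ x₂ h₁ h₂ =>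
    simp only [add_tmul, map_add] at h₁ h₂ ⊢
    rw [h₁, h₂]

lemma G_surjective (hm : 𝔪 * 𝔪 = 𝔪) : Function.Surjective (muTilde 𝔪 ↥𝔪) := by
  rw [G_eq]
  exact (mulMapI_surjective 𝔪 hm).comp (rT1_bij 𝔪 hm).surjective

lemma G_ker_torsion (hm : 𝔪 * 𝔪 = 𝔪) (k : mTilde 𝔪 ⊗[V] ↥𝔪)
    (hk : muTilde 𝔪 ↥𝔪 k = 0) : ∀ s ∈ 𝔪, s • k = 0 := by
  intro s hs
  rw [G_eq] at hk
  have h2 : ((mulMapI 𝔪).rTensor ↥𝔪) (s • k) = 0 := by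
    rw [map_smul]
    exact mulMapI_ker_torsion 𝔪 _ hk s hs
  apply (rT1_bij 𝔪 hm).injective
  rw [h2, map_zero]

/-- The key isomorphism: `μ' : 𝔪̃ ⊗ 𝔪̃ → 𝔪̃` is bijective. -/
lemma muTilde'_bij (hm : 𝔪 * 𝔪 = 𝔪) :
    Function.Bijective (muTilde 𝔪 (mTilde 𝔪)) := by
  have hG := rTensor_bij 𝔪 hm (P := mTilde 𝔪 ⊗[V] ↥𝔪) (Q := ↥𝔪) (muTilde 𝔪 ↥𝔪) (G_surjective 𝔪 hm)
    (fun k hk => G_ker_torsion 𝔪 hm k hk)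
  have heq : ∀ z : mTilde 𝔪 ⊗[V] mTilde 𝔪,
      muTilde 𝔪 (mTilde 𝔪) z
        = ((muTilde 𝔪 ↥𝔪).rTensor ↥𝔪)
            ((TensorProduct.assoc V (mTilde 𝔪) ↥𝔪 ↥𝔪).symm z) := by
    intro z
    induction z using TensorProduct.induction_on with
    | zero => simp
    | tmul x w =>
      induction w using TensorProduct.induction_on with
      | zero => simp
      | tmul c d =>
        simp only [muTilde_tmul, assoc_symm_tmul, LinearMap.rTensor_tmul, smul_tmul']
      | add w₁ w₂ h₁ h₂ =>
        simp only [tmul_add, map_add] at h₁ h₂ ⊢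
        rw [h₁, h₂]
    | add z₁ z₂ h₁ h₂ =>
      simp only [map_add] at h₁ h₂ ⊢
      rw [h₁, h₂]
  have : ⇑(muTilde 𝔪 (mTilde 𝔪))
      = ⇑((muTilde 𝔪 ↥𝔪).rTensor ↥𝔪) ∘ ⇑(TensorProduct.assoc V (mTilde 𝔪) ↥𝔪 ↥𝔪).symm :=
    funext heq
  rw [this]
  exact hG.comp (TensorProduct.assoc V (mTilde 𝔪) ↥𝔪 ↥𝔪).symm.bijective

/-- The symmetry lemma: `u ⊗ g(z) = z ⊗ g(u)` for any linear `g : 𝔪̃ → M`. -/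
lemma sym (hm : 𝔪 * 𝔪 = 𝔪) {M : Type*} [AddCommGroup M] [Module V M]
    (g : mTilde 𝔪 →ₗ[V] M) (u z : mTilde 𝔪) :
    u ⊗ₜ[V] g z = z ⊗ₜ[V] g u := by
  obtain ⟨U, rfl⟩ := (muTilde'_bij 𝔪 hm).surjective u
  induction U using TensorProduct.induction_on with
  | zero => simp
  | tmul x y =>
    rw [muTilde_tmul]
    calc (nuMap 𝔪 x • y) ⊗ₜ[V] g z
        = nuMap 𝔪 x • (y ⊗ₜ[V] g z) := by rw [smul_tmul']
      _ = x ⊗ₜ[V] muTilde 𝔪 M (y ⊗ₜ[V] g z) := star 𝔪 M x _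
      _ = x ⊗ₜ[V] g (nuMap 𝔪 y • z) := by rw [muTilde_tmul, map_smul]
      _ = x ⊗ₜ[V] g (nuMap 𝔪 z • y) := by rw [starS]
      _ = x ⊗ₜ[V] muTilde 𝔪 M (z ⊗ₜ[V] g y) := by rw [muTilde_tmul, map_smul]
      _ = nuMap 𝔪 x • (z ⊗ₜ[V] g y) := (star 𝔪 M x _).symm
      _ = z ⊗ₜ[V] (nuMap 𝔪 x • g y) := by rw [tmul_smul]
      _ = z ⊗ₜ[V] g (nuMap 𝔪 x • y) := by rw [map_smul]
  | add U₁ U₂ h₁ h₂ =>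
    rw [map_add, add_tmul, h₁, h₂, map_add, tmul_add]

section PartOne

/-- Bijectivity of the evaluation map `𝔪̃ ⊗ Hom(𝔪̃, X) → X` for `X ≅ 𝔪̃ ⊗ M`. -/
lemma part1_general (hm : 𝔪 * 𝔪 = 𝔪) {M X : Type*} [AddCommGroup M] [Module V M]
    [AddCommGroup X] [Module V X] (e : (mTilde 𝔪 ⊗[V] M) ≃ₗ[V] X) :
    Function.Bijective (evMap 𝔪 X) := by
  classical
  let fcX : M →ₗ[V] (mTilde 𝔪 →ₗ[V] X) :=
    (LinearMap.llcomp V (mTilde 𝔪) (mTilde 𝔪 ⊗[V] M) X e.toLinearMap).comp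
      (TensorProduct.mk V (mTilde 𝔪) M).flip
  have fcX_apply : ∀ (c : M) (z : mTilde 𝔪), fcX c z = e (z ⊗ₜ[V] c) := fun c z => rfl
  let β : X →ₗ[V] mTilde 𝔪 ⊗[V] (mTilde 𝔪 →ₗ[V] X) :=
    (TensorProduct.lift
      ((TensorProduct.mk V (mTilde 𝔪) (mTilde 𝔪 →ₗ[V] X)).compl₂ fcX)).comp
      e.symm.toLinearMap
  have β_e_tmul : ∀ (y : mTilde 𝔪) (c : M), β (e (y ⊗ₜ[V] c)) = y ⊗ₜ[V] fcX c := by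
    intro y c
    simp [β, TensorProduct.lift.tmul]
  have ev_β : ∀ w : X, evMap 𝔪 X (β w) = w := by
    intro w
    obtain ⟨W, rfl⟩ := e.surjective w
    induction W using TensorProduct.induction_on with
    | zero => simp
    | tmul y c => rw [β_e_tmul, evMap_tmul, fcX_apply]
    | add W₁ W₂ h₁ h₂ => rw [map_add, map_add, map_add, h₁, h₂]
  have D1 : ∀ w : X,
      muTilde 𝔪 (mTilde 𝔪 →ₗ[V] X) (β w) = fcX (muTilde 𝔪 M (e.symm w)) := by
    intro w
    obtain ⟨W, rfl⟩ := e.surjective w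
    induction W using TensorProduct.induction_on with
    | zero => simp
    | tmul y c =>
      rw [β_e_tmul, muTilde_tmul, LinearEquiv.symm_apply_apply, muTilde_tmul, map_smul]
    | add W₁ W₂ h₁ h₂ => simp only [map_add, h₁, h₂]
  have β_ev : ∀ t : mTilde 𝔪 ⊗[V] (mTilde 𝔪 →ₗ[V] X), β (evMap 𝔪 X t) = t := by
    intro t
    induction t using TensorProduct.induction_on with
    | zero => simp
    | tmul w f =>
      rw [evMap_tmul]
      obtain ⟨U, rfl⟩ := (muTilde'_bij 𝔪 hm).surjective w
      induction U using TensorProduct.induction_on with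
      | zero => simp
      | tmul x y =>
        rw [muTilde_tmul]
        have key : fcX (muTilde 𝔪 M (e.symm (f y))) = nuMap 𝔪 y • f := by
          apply LinearMap.ext
          intro u
          have h1 : fcX (muTilde 𝔪 M (e.symm (f y))) u
              = e (u ⊗ₜ[V] ((muTilde 𝔪 M).comp (e.symm.toLinearMap.comp f)) y) := rfl
          have h2 : (nuMap 𝔪 y • f) u = nuMap 𝔪 y • f u := rfl
          have h3 : nuMap 𝔪 y • f u
              = e (y ⊗ₜ[V] ((muTilde 𝔪 M).comp (e.symm.toLinearMap.comp f)) u) := by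
            calc nuMap 𝔪 y • f u
                = e (nuMap 𝔪 y • e.symm (f u)) := by
                  rw [map_smul, e.apply_symm_apply]
              _ = e (y ⊗ₜ[V] muTilde 𝔪 M (e.symm (f u))) := by
                  rw [star 𝔪 M y (e.symm (f u))]
              _ = _ := rfl
          rw [h1, h2, h3]
          exact congrArg e
            (sym 𝔪 hm ((muTilde 𝔪 M).comp (e.symm.toLinearMap.comp f)) u y)
        calc β (f (nuMap 𝔪 x • y))
            = nuMap 𝔪 x • β (f y) := by rw [map_smul, map_smul]
          _ = x ⊗ₜ[V] muTilde 𝔪 (mTilde 𝔪 →ₗ[V] X) (β (f y)) := star 𝔪 _ x _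
          _ = x ⊗ₜ[V] fcX (muTilde 𝔪 M (e.symm (f y))) := by rw [D1]
          _ = x ⊗ₜ[V] (nuMap 𝔪 y • f) := by rw [key]
          _ = nuMap 𝔪 x • (y ⊗ₜ[V] f) := by
              rw [star 𝔪 _ x (y ⊗ₜ[V] f), muTilde_tmul]
          _ = (nuMap 𝔪 x • y) ⊗ₜ[V] f := by rw [smul_tmul']
      | add U₁ U₂ h₁ h₂ =>
        simp only [map_add, add_tmul] at h₁ h₂ ⊢
        rw [h₁, h₂]
    | add t₁ t₂ h₁ h₂ => rw [map_add, map_add, h₁, h₂]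
  exact ⟨fun a b hab => by rw [← β_ev a, ← β_ev b, hab], fun w => ⟨β w, ev_β w⟩⟩

end PartOne

end Stmt14Aux

open Stmt14Aux in
/-- For a commutative V-algebra A: 𝔪̃ ⊗ Hom(𝔪̃, 𝔪̃ ⊗ A) ≅ 𝔪̃ ⊗ A (via evaluation),
and Hom(𝔪̃, 𝔪̃ ⊗ A) ≅ Hom(𝔪̃, A) (via postcomposition with the almost isomorphism
μ : 𝔪̃ ⊗ A → A). -/
theorem stmt14 {V : Type u} [CommRing V] (𝔪 : Ideal V) (hm : 𝔪 * 𝔪 = 𝔪)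
    (A : Type u) [CommRing A] [Algebra V A] :
    Function.Bijective (evMap 𝔪 (mTilde 𝔪 ⊗[V] A)) ∧
    Function.Bijective
      (LinearMap.llcomp (σ₁₂ := RingHom.id V) (σ₁₃ := RingHom.id V) V (mTilde 𝔪) (mTilde 𝔪 ⊗[V] A) A (muTilde 𝔪 A)) := by
  constructor
  · exact part1_general 𝔪 hm (M := A) (LinearEquiv.refl V (mTilde 𝔪 ⊗[V] A))
  · constructor
    · intro f g hfg
      have hfg' : ∀ y, muTilde 𝔪 A (f y) = muTilde 𝔪 A (g y) := fun y => by
        simpa using LinearMap.congr_fun hfg y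
      apply LinearMap.ext
      intro u
      obtain ⟨U, rfl⟩ := (muTilde'_bij 𝔪 hm).surjective u
      induction U using TensorProduct.induction_on with
      | zero => simp
      | tmul x y =>
        rw [muTilde_tmul, map_smul, map_smul, star 𝔪 A x (f y), star 𝔪 A x (g y), hfg' y]
      | add U₁ U₂ h₁ h₂ => simp only [map_add, h₁, h₂]
    · intro h
      let e := LinearEquiv.ofBijective (muTilde 𝔪 (mTilde 𝔪)) (muTilde'_bij 𝔪 hm)
      refine ⟨(LinearMap.lTensor (mTilde 𝔪) h).comp e.symm.toLinearMap, ?_⟩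
      apply LinearMap.ext
      intro u
      have claim : ∀ U : mTilde 𝔪 ⊗[V] mTilde 𝔪,
          muTilde 𝔪 A ((LinearMap.lTensor (mTilde 𝔪) h) U)
            = h (muTilde 𝔪 (mTilde 𝔪) U) := by
        intro U
        induction U using TensorProduct.induction_on with
        | zero => simp
        | tmul x y =>
          rw [LinearMap.lTensor_tmul, muTilde_tmul, muTilde_tmul, map_smul]
        | add U₁ U₂ h₁ h₂ => simp only [map_add, h₁, h₂]
      show muTilde 𝔪 A ((LinearMap.lTensor (mTilde 𝔪) h) (e.symm u)) = h u
      rw [claim]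
      congr 1
      exact e.apply_symm_apply u
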